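/- Let R be an algebraic curvature tensor on ℝ³. The product tensor of R with the flat factor ℝ² (an algebraic curvature tensor on ℝ⁵) has nonnegative isotropic curvature if and only if R has nonnegative sectional curvature, i.e. R(X,Y,X,Y) ≥ 0 for all X, Y. -/

import Mathlib

noncomputable section
open scoped BigOperators

def dotp {n : ℕ} (X Y : Fin n → ℝ) : ℝ := ∑ i, X i * Y i

def ON4 {n : ℕ} (e₁ e₂ e₃ e₄ : Fin n → ℝ) : Prop :=
  dotp e₁ e₁ = 1 ∧ dotp e₂ e₂ = 1 ∧ dotp e₃ e₃ = 1 ∧ dotp e₄ e₄ = 1 ∧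
  dotp e₁ e₂ = 0 ∧ dotp e₁ e₃ = 0 ∧ dotp e₁ e₄ = 0 ∧
  dotp e₂ e₃ = 0 ∧ dotp e₂ e₄ = 0 ∧ dotp e₃ e₄ = 0

def B0 : Fin 3 → ℝ := ![1,0,0]
def B1 : Fin 3 → ℝ := ![0,1,0]
def B2 : Fin 3 → ℝ := ![0,0,1]

/-- cross product -/
def cp (X Y : Fin 3 → ℝ) : Fin 3 → ℝ :=
  ![X 1 * Y 2 - X 2 * Y 1, X 2 * Y 0 - X 0 * Y 2, X 0 * Y 1 - X 1 * Y 0]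

section helpers

variable (R : MultilinearMap ℝ (fun _ : Fin 4 => (Fin 3 → ℝ)) ℝ)

/-- the associated symmetric bilinear form on Λ² ≅ ℝ³ -/
def TT (u v : Fin 3 → ℝ) : ℝ :=
    u 0 * v 0 * R ![B1,B2,B1,B2] + u 0 * v 1 * R ![B1,B2,B2,B0] + u 0 * v 2 * R ![B1,B2,B0,B1]
  + u 1 * v 0 * R ![B2,B0,B1,B2] + u 1 * v 1 * R ![B2,B0,B2,B0] + u 1 * v 2 * R ![B2,B0,B0,B1]
  + u 2 * v 0 * R ![B0,B1,B1,B2] + u 2 * v 1 * R ![B0,B1,B2,B0] + u 2 * v 2 * R ![B0,B1,B0,B1]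

lemma decomp (X : Fin 3 → ℝ) : X = X 0 • B0 + X 1 • B1 + X 2 • B2 := by
  funext j; fin_cases j <;> simp [B0, B1, B2]

lemma upd0 (X Y Z W A : Fin 3 → ℝ) :
    Function.update ![X, Y, Z, W] 0 A = ![A, Y, Z, W] := by
  funext i; fin_cases i <;> simp

lemma Radd0 (Y Z W A A' : Fin 3 → ℝ) :
    R ![A + A', Y, Z, W] = R ![A, Y, Z, W] + R ![A', Y, Z, W] := by
  have h := R.map_update_add ![A, Y, Z, W] (0 : Fin 4) A A'
  rwa [upd0, upd0, upd0] at h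

lemma Rsmul0 (c : ℝ) (Y Z W A : Fin 3 → ℝ) :
    R ![c • A, Y, Z, W] = c * R ![A, Y, Z, W] := by
  have h := R.map_update_smul ![A, Y, Z, W] (0 : Fin 4) c A
  rwa [upd0, upd0, smul_eq_mul] at h

lemma expand0 (X Y Z W : Fin 3 → ℝ) :
    R ![X, Y, Z, W] = X 0 * R ![B0, Y, Z, W] + X 1 * R ![B1, Y, Z, W] + X 2 * R ![B2, Y, Z, W] := by
  conv_lhs => rw [decomp X]
  rw [Radd0, Radd0, Rsmul0, Rsmul0, Rsmul0]

lemma upd1 (X Y Z W A : Fin 3 → ℝ) :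
    Function.update ![X, Y, Z, W] 1 A = ![X, A, Z, W] := by
  funext i; fin_cases i <;> simp

lemma Radd1 (X Z W A A' : Fin 3 → ℝ) :
    R ![X, A + A', Z, W] = R ![X, A, Z, W] + R ![X, A', Z, W] := by
  have h := R.map_update_add ![X, A, Z, W] (1 : Fin 4) A A'
  rwa [upd1, upd1, upd1] at h

lemma Rsmul1 (c : ℝ) (X Z W A : Fin 3 → ℝ) :
    R ![X, c • A, Z, W] = c * R ![X, A, Z, W] := by
  have h := R.map_update_smul ![X, A, Z, W] (1 : Fin 4) c A
  rwa [upd1, upd1, smul_eq_mul] at h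

lemma expand1 (X Y Z W : Fin 3 → ℝ) :
    R ![X, Y, Z, W] = Y 0 * R ![X, B0, Z, W] + Y 1 * R ![X, B1, Z, W] + Y 2 * R ![X, B2, Z, W] := by
  conv_lhs => rw [decomp Y]
  rw [Radd1, Radd1, Rsmul1, Rsmul1, Rsmul1]

lemma upd2 (X Y Z W A : Fin 3 → ℝ) :
    Function.update ![X, Y, Z, W] 2 A = ![X, Y, A, W] := by
  funext i; fin_cases i <;> simp

lemma Radd2 (X Y W A A' : Fin 3 → ℝ) :
    R ![X, Y, A + A', W] = R ![X, Y, A, W] + R ![X, Y, A', W] := by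
  have h := R.map_update_add ![X, Y, A, W] (2 : Fin 4) A A'
  rwa [upd2, upd2, upd2] at h

lemma Rsmul2 (c : ℝ) (X Y W A : Fin 3 → ℝ) :
    R ![X, Y, c • A, W] = c * R ![X, Y, A, W] := by
  have h := R.map_update_smul ![X, Y, A, W] (2 : Fin 4) c A
  rwa [upd2, upd2, smul_eq_mul] at h

lemma expand2 (X Y Z W : Fin 3 → ℝ) :
    R ![X, Y, Z, W] = Z 0 * R ![X, Y, B0, W] + Z 1 * R ![X, Y, B1, W] + Z 2 * R ![X, Y, B2, W] := by
  conv_lhs => rw [decomp Z]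
  rw [Radd2, Radd2, Rsmul2, Rsmul2, Rsmul2]

lemma upd3 (X Y Z W A : Fin 3 → ℝ) :
    Function.update ![X, Y, Z, W] 3 A = ![X, Y, Z, A] := by
  funext i; fin_cases i <;> simp

lemma Radd3 (X Y Z A A' : Fin 3 → ℝ) :
    R ![X, Y, Z, A + A'] = R ![X, Y, Z, A] + R ![X, Y, Z, A'] := by
  have h := R.map_update_add ![X, Y, Z, A] (3 : Fin 4) A A'
  rwa [upd3, upd3, upd3] at h

lemma Rsmul3 (c : ℝ) (X Y Z A : Fin 3 → ℝ) :
    R ![X, Y, Z, c • A] = c * R ![X, Y, Z, A] := by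
  have h := R.map_update_smul ![X, Y, Z, A] (3 : Fin 4) c A
  rwa [upd3, upd3, smul_eq_mul] at h

lemma expand3 (X Y Z W : Fin 3 → ℝ) :
    R ![X, Y, Z, W] = W 0 * R ![X, Y, Z, B0] + W 1 * R ![X, Y, Z, B1] + W 2 * R ![X, Y, Z, B2] := by
  conv_lhs => rw [decomp W]
  rw [Radd3, Radd3, Rsmul3, Rsmul3, Rsmul3]



lemma z1 (hanti : ∀ X Y Z W, R ![X, Y, Z, W] = - R ![Y, X, Z, W]) (X Z W : Fin 3 → ℝ) : R ![X, X, Z, W] = 0 := by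
  have h := hanti X X Z W; linarith

lemma z2 (hanti : ∀ X Y Z W, R ![X, Y, Z, W] = - R ![Y, X, Z, W]) (hpair : ∀ X Y Z W, R ![X, Y, Z, W] = R ![Z, W, X, Y]) (X Y Z : Fin 3 → ℝ) : R ![X, Y, Z, Z] = 0 := by
  rw [hpair]; exact z1 R hanti Z X Y

lemma s10 (hanti : ∀ X Y Z W, R ![X, Y, Z, W] = - R ![Y, X, Z, W]) (Z W : Fin 3 → ℝ) : R ![B1, B0, Z, W] = - R ![B0, B1, Z, W] := hanti B1 B0 Z W
lemma s20 (hanti : ∀ X Y Z W, R ![X, Y, Z, W] = - R ![Y, X, Z, W]) (Z W : Fin 3 → ℝ) : R ![B2, B0, Z, W] = - R ![B0, B2, Z, W] := hanti B2 B0 Z W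
lemma s21 (hanti : ∀ X Y Z W, R ![X, Y, Z, W] = - R ![Y, X, Z, W]) (Z W : Fin 3 → ℝ) : R ![B2, B1, Z, W] = - R ![B1, B2, Z, W] := hanti B2 B1 Z W

lemma t10 (hanti : ∀ X Y Z W, R ![X, Y, Z, W] = - R ![Y, X, Z, W]) (hpair : ∀ X Y Z W, R ![X, Y, Z, W] = R ![Z, W, X, Y]) (X Y : Fin 3 → ℝ) : R ![X, Y, B1, B0] = - R ![X, Y, B0, B1] := by
  rw [hpair, hanti, hpair]
lemma t20 (hanti : ∀ X Y Z W, R ![X, Y, Z, W] = - R ![Y, X, Z, W]) (hpair : ∀ X Y Z W, R ![X, Y, Z, W] = R ![Z, W, X, Y]) (X Y : Fin 3 → ℝ) : R ![X, Y, B2, B0] = - R ![X, Y, B0, B2] := by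
  rw [hpair, hanti, hpair]
lemma t21 (hanti : ∀ X Y Z W, R ![X, Y, Z, W] = - R ![Y, X, Z, W]) (hpair : ∀ X Y Z W, R ![X, Y, Z, W] = R ![Z, W, X, Y]) (X Y : Fin 3 → ℝ) : R ![X, Y, B2, B1] = - R ![X, Y, B1, B2] := by
  rw [hpair, hanti, hpair]

lemma keyId (hanti : ∀ X Y Z W, R ![X, Y, Z, W] = - R ![Y, X, Z, W]) (hpair : ∀ X Y Z W, R ![X, Y, Z, W] = R ![Z, W, X, Y]) (X Y Z W : Fin 3 → ℝ) :
    R ![X, Y, Z, W] = TT R (cp X Y) (cp Z W) := by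
  rw [expand0 R X Y Z W]
  rw [expand1 R B0 Y Z W, expand1 R B1 Y Z W, expand1 R B2 Y Z W]
  rw [expand2 R B0 B0 Z W, expand2 R B0 B1 Z W, expand2 R B0 B2 Z W, expand2 R B1 B0 Z W, expand2 R B1 B1 Z W, expand2 R B1 B2 Z W, expand2 R B2 B0 Z W, expand2 R B2 B1 Z W, expand2 R B2 B2 Z W]
  rw [expand3 R B0 B0 B0 W, expand3 R B0 B0 B1 W, expand3 R B0 B0 B2 W, expand3 R B0 B1 B0 W, expand3 R B0 B1 B1 W, expand3 R B0 B1 B2 W, expand3 R B0 B2 B0 W, expand3 R B0 B2 B1 W, expand3 R B0 B2 B2 W]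
  rw [expand3 R B1 B0 B0 W, expand3 R B1 B0 B1 W, expand3 R B1 B0 B2 W, expand3 R B1 B1 B0 W, expand3 R B1 B1 B1 W, expand3 R B1 B1 B2 W, expand3 R B1 B2 B0 W, expand3 R B1 B2 B1 W, expand3 R B1 B2 B2 W]
  rw [expand3 R B2 B0 B0 W, expand3 R B2 B0 B1 W, expand3 R B2 B0 B2 W, expand3 R B2 B1 B0 W, expand3 R B2 B1 B1 W, expand3 R B2 B1 B2 W, expand3 R B2 B2 B0 W, expand3 R B2 B2 B1 W, expand3 R B2 B2 B2 W]
  simp only [TT, cp, Matrix.cons_val_zero, Matrix.cons_val_one, Matrix.head_cons,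
    Matrix.cons_val_two, Matrix.tail_cons]
  simp only [z1 R hanti, z2 R hanti hpair, s10 R hanti, s20 R hanti, s21 R hanti,
    t10 R hanti hpair, t20 R hanti hpair, t21 R hanti hpair]
  ring

lemma T00 : TT R 0 0 = 0 := by simp [TT]

lemma Tsub (a d : Fin 3 → ℝ) :
    TT R (a - d) (a - d) = TT R a a - TT R a d - TT R d a + TT R d d := by
  simp only [TT, Pi.sub_apply]; ring

lemma Tadd (a d : Fin 3 → ℝ) :
    TT R (a + d) (a + d) = TT R a a + TT R a d + TT R d a + TT R d d := by
  simp only [TT, Pi.add_apply]; ring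

lemma Tsmul (s : ℝ) (w : Fin 3 → ℝ) : TT R (s • w) (s • w) = s ^ 2 * TT R w w := by
  simp only [TT, Pi.smul_apply, smul_eq_mul]; ring

lemma Tsymm (hpair : ∀ X Y Z W, R ![X, Y, Z, W] = R ![Z, W, X, Y]) (u v : Fin 3 → ℝ) :
    TT R u v = TT R v u := by
  simp only [TT]
  linear_combination (u 0 * v 1 - u 1 * v 0) * hpair B1 B2 B2 B0
    + (u 0 * v 2 - u 2 * v 0) * hpair B1 B2 B0 B1
    + (u 1 * v 2 - u 2 * v 1) * hpair B2 B0 B0 B1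

lemma Rz0 (Y Z W : Fin 3 → ℝ) : R ![0, Y, Z, W] = 0 :=
  R.map_coord_zero 0 (by simp)

lemma Rz1 (X Z W : Fin 3 → ℝ) : R ![X, 0, Z, W] = 0 :=
  R.map_coord_zero 1 (by simp)

lemma bianchi4 (hanti : ∀ X Y Z W, R ![X, Y, Z, W] = - R ![Y, X, Z, W])
    (hpair : ∀ X Y Z W, R ![X, Y, Z, W] = R ![Z, W, X, Y])
    (hbianchi : ∀ X Y Z W,
      R ![X, Y, Z, W] + R ![Y, Z, X, W] + R ![Z, X, Y, W] = 0)
    (x1 x2 x3 x4 : Fin 3 → ℝ) :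
    R ![x1, x2, x3, x4] = R ![x1, x3, x2, x4] - R ![x1, x4, x2, x3] := by
  have hb := hbianchi x1 x2 x3 x4
  have h1 : R ![x2, x3, x1, x4] = R ![x1, x4, x2, x3] := hpair _ _ _ _
  have h2 : R ![x3, x1, x2, x4] = - R ![x1, x3, x2, x4] := hanti _ _ _ _
  linarith

end helpers

lemma dotp3 (u v : Fin 3 → ℝ) : dotp u v = u 0 * v 0 + u 1 * v 1 + u 2 * v 2 := by
  simp [dotp, Fin.sum_univ_three]

lemma dotp_comm {n : ℕ} (u v : Fin n → ℝ) : dotp u v = dotp v u := by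
  simp [dotp, mul_comm]

lemma dotp_smul2 (s t : ℝ) (y z : Fin 3 → ℝ) :
    dotp (s • y) (t • z) = s * t * dotp y z := by
  simp only [dotp3, Pi.smul_apply, smul_eq_mul]; ring

lemma lagrange (w u : Fin 3 → ℝ) :
    dotp (cp w u) (cp w u) = dotp w w * dotp u u - dotp w u * dotp w u := by
  simp only [dotp3, cp, Matrix.cons_val_zero, Matrix.cons_val_one, Matrix.head_cons,
    Matrix.cons_val_two, Matrix.tail_cons]
  ring

lemma triple (u w : Fin 3 → ℝ) : dotp u (cp w u) = 0 := by
  simp only [dotp3, cp, Matrix.cons_val_zero, Matrix.cons_val_one, Matrix.head_cons,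
    Matrix.cons_val_two, Matrix.tail_cons]
  ring

lemma cp_perp (u w : Fin 3 → ℝ) (h : dotp u w = 0) :
    cp u (cp w u) = dotp u u • w := by
  have h' : u 0 * w 0 + u 1 * w 1 + u 2 * w 2 = 0 := by rw [← dotp3]; exact h
  funext i
  fin_cases i
  · simp [cp, dotp3]; linear_combination (-(u 0)) * h'
  · simp [cp, dotp3]; linear_combination (-(u 1)) * h'
  · simp [cp, dotp3]; linear_combination (-(u 2)) * h'

lemma tricho (w : Fin 3 → ℝ) (hw : w ≠ 0) : w 0 ≠ 0 ∨ w 1 ≠ 0 ∨ w 2 ≠ 0 := by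
  by_contra hc
  push_neg at hc
  apply hw
  funext i
  fin_cases i
  · exact hc.1
  · exact hc.2.1
  · exact hc.2.2

lemma dotp_pos (w : Fin 3 → ℝ) (hw : w ≠ 0) : 0 < dotp w w := by
  rw [dotp3]
  rcases tricho w hw with h | h | h <;>
    nlinarith [mul_self_pos.mpr h, mul_self_nonneg (w 0), mul_self_nonneg (w 1),
      mul_self_nonneg (w 2)]

lemma exists_perp (w : Fin 3 → ℝ) (hw : w ≠ 0) :
    ∃ u : Fin 3 → ℝ, dotp u w = 0 ∧ 0 < dotp u u := by
  rcases tricho w hw with h | h | h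
  · refine ⟨![w 1, -(w 0), 0], ?_, ?_⟩
    · simp [dotp3]; ring
    · simp [dotp3]; nlinarith [mul_self_pos.mpr h, mul_self_nonneg (w 1)]
  · refine ⟨![w 1, -(w 0), 0], ?_, ?_⟩
    · simp [dotp3]; ring
    · simp [dotp3]; nlinarith [mul_self_pos.mpr h, mul_self_nonneg (w 0)]
  · refine ⟨![w 2, 0, -(w 0)], ?_, ?_⟩
    · simp [dotp3]; ring
    · simp [dotp3]; nlinarith [mul_self_pos.mpr h, mul_self_nonneg (w 0)]

lemma Tpsd (R : MultilinearMap ℝ (fun _ : Fin 4 => (Fin 3 → ℝ)) ℝ)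
    (hanti : ∀ X Y Z W, R ![X, Y, Z, W] = - R ![Y, X, Z, W])
    (hpair : ∀ X Y Z W, R ![X, Y, Z, W] = R ![Z, W, X, Y])
    (hsec : ∀ X Y : Fin 3 → ℝ, 0 ≤ R ![X, Y, X, Y]) (w : Fin 3 → ℝ) :
    0 ≤ TT R w w := by
  by_cases hw : w = 0
  · rw [hw]; exact le_of_eq (T00 R).symm
  · obtain ⟨u, hperp, hu⟩ := exists_perp w hw
    have h1 : 0 ≤ R ![u, cp w u, u, cp w u] := hsec _ _
    rw [keyId R hanti hpair, cp_perp u w hperp, Tsmul] at h1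
    nlinarith [pow_pos hu 2]

def emb (z : Fin 3 → ℝ) : Fin 5 → ℝ := ![z 0, z 1, z 2, 0, 0]
def d3 : Fin 5 → ℝ := ![0, 0, 0, 1, 0]
def d4 : Fin 5 → ℝ := ![0, 0, 0, 0, 1]
def pr (e : Fin 5 → ℝ) : Fin 3 → ℝ := fun i => e (Fin.castLE (Nat.le_add_right 3 2) i)

lemma pr_emb (z : Fin 3 → ℝ) : pr (emb z) = z := by
  funext i; fin_cases i <;> rfl

lemma pr_d3 : pr d3 = 0 := by funext i; fin_cases i <;> rfl
lemma pr_d4 : pr d4 = 0 := by funext i; fin_cases i <;> rfl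

lemma dotp5 (u v : Fin 5 → ℝ) :
    dotp u v = u 0 * v 0 + u 1 * v 1 + u 2 * v 2 + u 3 * v 3 + u 4 * v 4 := by
  simp [dotp, Fin.sum_univ_five]

lemma dotp_emb (y z : Fin 3 → ℝ) : dotp (emb y) (emb z) = dotp y z := by
  simp [dotp5, dotp3, emb]

lemma dotp_emb_d3 (z : Fin 3 → ℝ) : dotp (emb z) d3 = 0 := by simp [dotp5, emb, d3]
lemma dotp_emb_d4 (z : Fin 3 → ℝ) : dotp (emb z) d4 = 0 := by simp [dotp5, emb, d4]
lemma dotp_d3_d3 : dotp d3 d3 = 1 := by simp [dotp5, d3]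
lemma dotp_d4_d4 : dotp d4 d4 = 1 := by simp [dotp5, d4]
lemma dotp_d3_d4 : dotp d3 d4 = 0 := by simp [dotp5, d3, d4]

theorem product_with_plane_nic_iff_sectional_nonneg
    (R : MultilinearMap ℝ (fun _ : Fin 4 => (Fin 3 → ℝ)) ℝ)
    (hanti : ∀ X Y Z W, R ![X, Y, Z, W] = - R ![Y, X, Z, W])
    (hpair : ∀ X Y Z W, R ![X, Y, Z, W] = R ![Z, W, X, Y])
    (hbianchi : ∀ X Y Z W,
      R ![X, Y, Z, W] + R ![Y, Z, X, W] + R ![Z, X, Y, W] = 0)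
    -- the product curvature tensor on ℝ⁵ = ℝ³ × ℝ², extending R by zero
    (R5 : MultilinearMap ℝ (fun _ : Fin 4 => (Fin 5 → ℝ)) ℝ)
    (hR5 : R5 = R.compLinearMap
      (fun _ => LinearMap.funLeft ℝ ℝ (Fin.castLE (by omega) : Fin 3 → Fin 5))) :
    (∀ e₁ e₂ e₃ e₄ : Fin 5 → ℝ, ON4 e₁ e₂ e₃ e₄ →
      0 ≤ R5 ![e₁, e₃, e₁, e₃] + R5 ![e₁, e₄, e₁, e₄] + R5 ![e₂, e₃, e₂, e₃]
          + R5 ![e₂, e₄, e₂, e₄] - 2 * R5 ![e₁, e₂, e₃, e₄]) ↔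
    (∀ X Y : Fin 3 → ℝ, 0 ≤ R ![X, Y, X, Y]) := by
  have hR5app : ∀ p q r s : Fin 5 → ℝ,
      R5 ![p, q, r, s] = R ![pr p, pr q, pr r, pr s] := by
    intro p q r s
    rw [hR5, MultilinearMap.compLinearMap_apply]
    congr 1
    funext i
    fin_cases i <;> rfl
  constructor
  · -- nonneg isotropic curvature → nonneg sectional curvature
    intro h5 X Y
    rw [keyId R hanti hpair]
    set w := cp X Y with hwdef
    by_cases hw : w = 0
    · rw [hw]; exact le_of_eq (T00 R).symm
    · obtain ⟨u, hperp, hu⟩ := exists_perp w hw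
      set v := cp w u with hvdef
      have hvv : dotp v v = dotp w w * dotp u u := by
        rw [hvdef, lagrange, dotp_comm w u, hperp]; ring
      have hww := dotp_pos w hw
      have hv : 0 < dotp v v := by rw [hvv]; exact mul_pos hww hu
      set a := Real.sqrt (dotp u u) with hadef
      set b := Real.sqrt (dotp v v) with hbdef
      have ha : 0 < a := Real.sqrt_pos.mpr hu
      have hb : 0 < b := Real.sqrt_pos.mpr hv
      have haa : a * a = dotp u u := Real.mul_self_sqrt hu.le
      have hbb : b * b = dotp v v := Real.mul_self_sqrt hv.le
      have hON : ON4 (emb (a⁻¹ • u)) d3 (emb (b⁻¹ • v)) d4 := by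
        refine ⟨?_, ?_, ?_, ?_, ?_, ?_, ?_, ?_, ?_, ?_⟩
        · rw [dotp_emb, dotp_smul2, ← haa]; field_simp
        · exact dotp_d3_d3
        · rw [dotp_emb, dotp_smul2, ← hbb]; field_simp
        · exact dotp_d4_d4
        · exact dotp_emb_d3 _
        · rw [dotp_emb, dotp_smul2, hvdef, triple, mul_zero]
        · exact dotp_emb_d4 _
        · rw [dotp_comm]; exact dotp_emb_d3 _
        · exact dotp_d3_d4
        · exact dotp_emb_d4 _
      have key := h5 (emb (a⁻¹ • u)) d3 (emb (b⁻¹ • v)) d4 hON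
      simp only [hR5app, pr_emb, pr_d3, pr_d4] at key
      rw [Rz0 R, Rz1 R, Rz0 R, Rz1 R] at key
      rw [Rsmul0, Rsmul1, Rsmul2, Rsmul3] at key
      rw [keyId R hanti hpair, hvdef, cp_perp u w hperp, Tsmul] at key
      have hc : 0 < a⁻¹ * (b⁻¹ * (a⁻¹ * (b⁻¹ * dotp u u ^ 2))) :=
        mul_pos (inv_pos.mpr ha) (mul_pos (inv_pos.mpr hb)
          (mul_pos (inv_pos.mpr ha) (mul_pos (inv_pos.mpr hb) (pow_pos hu 2))))
      nlinarith [key, hc]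
  · -- nonneg sectional curvature → nonneg isotropic curvature
    intro hsec e₁ e₂ e₃ e₄ _
    rw [hR5app, hR5app, hR5app, hR5app, hR5app]
    rw [bianchi4 R hanti hpair hbianchi (pr e₁) (pr e₂) (pr e₃) (pr e₄)]
    rw [keyId R hanti hpair (pr e₁) (pr e₃) (pr e₁) (pr e₃),
      keyId R hanti hpair (pr e₁) (pr e₄) (pr e₁) (pr e₄),
      keyId R hanti hpair (pr e₂) (pr e₃) (pr e₂) (pr e₃),
      keyId R hanti hpair (pr e₂) (pr e₄) (pr e₂) (pr e₄),
      keyId R hanti hpair (pr e₁) (pr e₃) (pr e₂) (pr e₄),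
      keyId R hanti hpair (pr e₁) (pr e₄) (pr e₂) (pr e₃)]
    have h1 := Tpsd R hanti hpair hsec (cp (pr e₁) (pr e₃) - cp (pr e₂) (pr e₄))
    have h2 := Tpsd R hanti hpair hsec (cp (pr e₁) (pr e₄) + cp (pr e₂) (pr e₃))
    rw [Tsub] at h1
    rw [Tadd] at h2
    have hs1 := Tsymm R hpair (cp (pr e₁) (pr e₃)) (cp (pr e₂) (pr e₄))
    have hs2 := Tsymm R hpair (cp (pr e₁) (pr e₄)) (cp (pr e₂) (pr e₃))
    linarith
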